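/- In the Weyl-group setting above, define Φ : ℚ^m → V on the standard basis by Φ(e_h) = (1/2)(w^Δ)^{−1}(β_{j_h}), and let Ψ : ker(w + w^Δ) → ker(M) be Ψ(γ) = Σ_h ⟨(β^Δ_{j_h})∨, w^Δ(γ)⟩ e_h. Then Φ maps ker(M) into ker(w + w^Δ), and the restrictions satisfy Ψ ∘ Φ = id on ker(M) and Φ ∘ Ψ = id on ker(w + w^Δ). -/

import Mathlib

open scoped RealInnerProductSpace

/-- `pref w s ℓ = w₀ s₁ w₁ ⋯ s_ℓ w_ℓ` (composition of endomorphisms). -/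
def pref {V : Type*} [NormedAddCommGroup V] [InnerProductSpace ℝ V]
    (w s : ℕ → Module.End ℝ V) : ℕ → Module.End ℝ V
  | 0 => w 0
  | ℓ + 1 => pref w s ℓ * s (ℓ + 1) * w (ℓ + 1)

/-- `plainPref w ℓ = w₀ w₁ ⋯ w_ℓ`. -/
def plainPref {V : Type*} [NormedAddCommGroup V] [InnerProductSpace ℝ V]
    (w : ℕ → Module.End ℝ V) : ℕ → Module.End ℝ V
  | 0 => w 0
  | ℓ + 1 => plainPref w ℓ * w (ℓ + 1)

/-- `suff w m ℓ = w_ℓ w_{ℓ+1} ⋯ w_m`. -/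
def suff {V : Type*} [NormedAddCommGroup V] [InnerProductSpace ℝ V]
    (w : ℕ → Module.End ℝ V) (m ℓ : ℕ) : Module.End ℝ V :=
  ((List.range (m + 1 - ℓ)).map fun i => w (ℓ + i)).prod

/-- `uop w s m ℓ = w₀ s₁ w₁ ⋯ w_{ℓ-1} (s_ℓ - id) w_ℓ ⋯ w_m`. -/
def uop {V : Type*} [NormedAddCommGroup V] [InnerProductSpace ℝ V]
    (w s : ℕ → Module.End ℝ V) (m ℓ : ℕ) : Module.End ℝ V :=
  pref w s (ℓ - 1) * (s ℓ - 1) * suff w m ℓ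

/-- `vop w s m ℓ = w₀ s₁ w₁ ⋯ w_{ℓ-1} (s_ℓ + id) w_ℓ ⋯ w_m`. -/
def vop {V : Type*} [NormedAddCommGroup V] [InnerProductSpace ℝ V]
    (w s : ℕ → Module.End ℝ V) (m ℓ : ℕ) : Module.End ℝ V :=
  pref w s (ℓ - 1) * (s ℓ + 1) * suff w m ℓ

/-- `β_{j_ℓ} = w₀ s₁ w₁ ⋯ s_{ℓ-1} w_{ℓ-1} (α_{j_ℓ})`. -/
def betaV {V : Type*} [NormedAddCommGroup V] [InnerProductSpace ℝ V]
    (w s : ℕ → Module.End ℝ V) (α : ℕ → V) (ℓ : ℕ) : V :=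
  pref w s (ℓ - 1) (α ℓ)

/-- `β^Δ_{j_ℓ} = w₀ w₁ ⋯ w_{ℓ-1} (α_{j_ℓ})`. -/
def betaD {V : Type*} [NormedAddCommGroup V] [InnerProductSpace ℝ V]
    (w : ℕ → Module.End ℝ V) (α : ℕ → V) (ℓ : ℕ) : V :=
  plainPref w (ℓ - 1) (α ℓ)

/-- `⟨(β^Δ_{j_ℓ})∨, w^Δ(γ)⟩` where `β∨ = (2/⟨β,β⟩)β`. -/
noncomputable def coeffc {V : Type*} [NormedAddCommGroup V] [InnerProductSpace ℝ V]
    (w s : ℕ → Module.End ℝ V) (α : ℕ → V) (m : ℕ) (γ : V) (ℓ : ℕ) : ℝ :=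
  (2 / ⟪betaD w α ℓ, betaD w α ℓ⟫) * ⟪betaD w α ℓ, plainPref w m γ⟫

section Aux

variable {V : Type*} [NormedAddCommGroup V] [InnerProductSpace ℝ V]

lemma suff_top (w : ℕ → Module.End ℝ V) (m : ℕ) : suff w m (m + 1) = 1 := by
  simp [suff, Nat.sub_self]

lemma suff_eq (w : ℕ → Module.End ℝ V) {m ℓ : ℕ} (h : ℓ ≤ m) :
    suff w m ℓ = w ℓ * suff w m (ℓ + 1) := by
  unfold suff
  have h1 : m + 1 - ℓ = (m - ℓ) + 1 := by omega
  have h2 : m + 1 - (ℓ + 1) = m - ℓ := by omega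
  rw [h1, h2, List.range_succ_eq_map, List.map_cons, List.map_map, List.prod_cons,
    Nat.add_zero]
  have : ((fun i => w (ℓ + i)) ∘ Nat.succ) = fun i => w (ℓ + 1 + i) := by
    funext i
    exact congrArg w (by omega)
  rw [this]

lemma plainPref_mul_suff (w : ℕ → Module.End ℝ V) :
    ∀ b a, plainPref w a * suff w (a + b) (a + 1) = plainPref w (a + b)
  | 0, a => by
      have h0 : suff w (a + 0) (a + 1) = 1 := suff_top w a
      rw [h0, mul_one]
      rfl
  | b + 1, a => by
      have h1 : suff w (a + (b + 1)) (a + 1) = w (a + 1) * suff w (a + (b + 1)) (a + 2) :=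
        suff_eq w (by omega)
      have h2 := plainPref_mul_suff w b (a + 1)
      rw [h1, ← mul_assoc]
      have h3 : plainPref w a * w (a + 1) = plainPref w (a + 1) := rfl
      rw [h3]
      have he : a + (b + 1) = (a + 1) + b := by omega
      rw [he]
      exact h2

lemma plainPref_mul_suff' (w : ℕ → Module.End ℝ V) {m n : ℕ} (h : n ≤ m) :
    plainPref w n * suff w m (n + 1) = plainPref w m := by
  obtain ⟨b, rfl⟩ := Nat.exists_eq_add_of_le h
  exact plainPref_mul_suff w b n

lemma telescope (w s : ℕ → Module.End ℝ V) (m : ℕ) :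
    ∀ n, n ≤ m → pref w s n * suff w m (n + 1) =
      plainPref w m + ∑ i ∈ Finset.range n, uop w s m (i + 1)
  | 0, h => by
      rw [Finset.range_zero, Finset.sum_empty, add_zero]
      show plainPref w 0 * suff w m (0 + 1) = plainPref w m
      exact plainPref_mul_suff' w h
  | n + 1, h => by
      have hsf : suff w m (n + 1) = w (n + 1) * suff w m (n + 2) := suff_eq w (m := m) h
      have hp : pref w s (n + 1) = pref w s n * s (n + 1) * w (n + 1) := rfl
      have IH := telescope w s m n (by omega)
      have huop : uop w s m (n + 1) = pref w s n * (s (n + 1) - 1) * suff w m (n + 1) := by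
        unfold uop; norm_num
      calc pref w s (n + 1) * suff w m (n + 2)
          = pref w s n * s (n + 1) * (w (n + 1) * suff w m (n + 2)) := by
            rw [hp, mul_assoc]
        _ = pref w s n * suff w m (n + 1) + pref w s n * (s (n + 1) - 1) * suff w m (n + 1) := by
            rw [← hsf]; noncomm_ring
        _ = plainPref w m + ∑ i ∈ Finset.range (n + 1), uop w s m (i + 1) := by
            rw [IH, ← huop, Finset.sum_range_succ, add_assoc]

end Aux

section Aux2

variable {V : Type*} [NormedAddCommGroup V] [InnerProductSpace ℝ V]
variable {w s : ℕ → Module.End ℝ V} {α : ℕ → V}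

lemma s_orth (hα : ∀ ℓ, α ℓ ≠ 0)
    (hs : ∀ ℓ (v : V), s ℓ v = v - ((2 * ⟪α ℓ, v⟫) / ⟪α ℓ, α ℓ⟫) • α ℓ)
    (ℓ : ℕ) (x y : V) : ⟪s ℓ x, s ℓ y⟫ = ⟪x, y⟫ := by
  have hA : ⟪α ℓ, α ℓ⟫ ≠ 0 := inner_self_ne_zero.2 (hα ℓ)
  rw [hs, hs]
  simp only [inner_sub_left, inner_sub_right, real_inner_smul_left, real_inner_smul_right,
    real_inner_comm (α ℓ) x, real_inner_comm (α ℓ) y]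
  field_simp
  ring

lemma pref_orth (hα : ∀ ℓ, α ℓ ≠ 0)
    (hw : ∀ i (x y : V), ⟪w i x, w i y⟫ = ⟪x, y⟫)
    (hs : ∀ ℓ (v : V), s ℓ v = v - ((2 * ⟪α ℓ, v⟫) / ⟪α ℓ, α ℓ⟫) • α ℓ) :
    ∀ ℓ (x y : V), ⟪pref w s ℓ x, pref w s ℓ y⟫ = ⟪x, y⟫
  | 0, x, y => hw 0 x y
  | ℓ + 1, x, y => by
      have : ∀ v, pref w s (ℓ + 1) v = pref w s ℓ (s (ℓ + 1) (w (ℓ + 1) v)) := fun v => rfl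
      rw [this, this, pref_orth hα hw hs ℓ, s_orth hα hs, hw]

lemma plainPref_orth (hw : ∀ i (x y : V), ⟪w i x, w i y⟫ = ⟪x, y⟫) :
    ∀ ℓ (x y : V), ⟪plainPref w ℓ x, plainPref w ℓ y⟫ = ⟪x, y⟫
  | 0, x, y => hw 0 x y
  | ℓ + 1, x, y => by
      have : ∀ v, plainPref w (ℓ + 1) v = plainPref w ℓ (w (ℓ + 1) v) := fun v => rfl
      rw [this, this, plainPref_orth hw ℓ, hw]

lemma uop_apply (hs : ∀ ℓ (v : V), s ℓ v = v - ((2 * ⟪α ℓ, v⟫) / ⟪α ℓ, α ℓ⟫) • α ℓ)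
    (m n : ℕ) (v : V) :
    uop w s m (n + 1) v
      = -(((2 * ⟪α (n + 1), suff w m (n + 1) v⟫) / ⟪α (n + 1), α (n + 1)⟫)
          • betaV w s α (n + 1)) := by
  unfold uop betaV
  simp only [Nat.add_sub_cancel, Module.End.mul_apply, LinearMap.sub_apply,
    Module.End.one_apply, hs]
  rw [sub_sub_cancel_left, map_neg, map_smul]

lemma betaD_coeff (hw : ∀ i (x y : V), ⟪w i x, w i y⟫ = ⟪x, y⟫)
    {m n : ℕ} (h : n ≤ m) (γ : V) :
    coeffc w s α m γ (n + 1)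
      = (2 / ⟪α (n + 1), α (n + 1)⟫) * ⟪α (n + 1), suff w m (n + 1) γ⟫ := by
  unfold coeffc betaD
  simp only [Nat.add_sub_cancel]
  rw [plainPref_orth hw n]
  have h2 : plainPref w m γ = plainPref w n (suff w m (n + 1) γ) := by
    conv_lhs => rw [← plainPref_mul_suff' w h]
    rfl
  rw [h2, plainPref_orth hw n]

lemma betaV_inner (hα : ∀ ℓ, α ℓ ≠ 0)
    (hw : ∀ i (x y : V), ⟪w i x, w i y⟫ = ⟪x, y⟫)
    (hs : ∀ ℓ (v : V), s ℓ v = v - ((2 * ⟪α ℓ, v⟫) / ⟪α ℓ, α ℓ⟫) • α ℓ)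
    (m n : ℕ) (v : V) :
    ⟪α (n + 1), suff w m (n + 1) v⟫
      = ⟪betaV w s α (n + 1), (pref w s n * suff w m (n + 1)) v⟫ := by
  unfold betaV
  simp only [Nat.add_sub_cancel, Module.End.mul_apply]
  rw [pref_orth hα hw hs n]

lemma sum_range_ite {M : Type*} [AddCommMonoid M] (f : ℕ → M) {n m : ℕ} (h : n ≤ m) :
    ∑ i ∈ Finset.range m, (if i < n then f i else 0) = ∑ i ∈ Finset.range n, f i := by
  rw [← Finset.sum_filter]
  congr 1
  ext i
  simp only [Finset.mem_filter, Finset.mem_range]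
  omega

end Aux2

theorem Phi_Psi_inverse_bijections
    {V : Type*} [NormedAddCommGroup V] [InnerProductSpace ℝ V] [FiniteDimensional ℝ V]
    (m : ℕ) (w s : ℕ → Module.End ℝ V) (α : ℕ → V)
    (hα : ∀ ℓ, α ℓ ≠ 0)
    (hw : ∀ i (x y : V), ⟪w i x, w i y⟫ = ⟪x, y⟫)
    (hs : ∀ ℓ (v : V), s ℓ v = v - ((2 * ⟪α ℓ, v⟫) / ⟪α ℓ, α ℓ⟫) • α ℓ)
    (wΔinv : Module.End ℝ V)
    (hinv : wΔinv * plainPref w m = 1 ∧ plainPref w m * wΔinv = 1)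
    (M : Matrix (Fin m) (Fin m) ℝ)
    (hM : ∀ i l : Fin m, M i l =
      if i < l then ⟪betaV w s α (↑i + 1), betaV w s α (↑l + 1)⟫
      else if l < i then -⟪betaV w s α (↑l + 1), betaV w s α (↑i + 1)⟫ else 0)
    (Φ : (Fin m → ℝ) →ₗ[ℝ] V)
    (hΦ : ∀ h : Fin m,
      Φ (Pi.single h 1) = (1 / 2 : ℝ) • wΔinv (betaV w s α (↑h + 1))) :
    (∀ x ∈ LinearMap.ker M.mulVecLin, (pref w s m + plainPref w m) (Φ x) = 0) ∧
      (∀ x ∈ LinearMap.ker M.mulVecLin,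
        (fun h : Fin m => coeffc w s α m (Φ x) (↑h + 1)) = x) ∧
      (∀ γ : V, (pref w s m + plainPref w m) γ = 0 →
        Φ (fun h : Fin m => coeffc w s α m γ (↑h + 1)) = γ) := by
  obtain ⟨hinv1, hinv2⟩ := hinv
  have hA0 : ∀ n, ⟪α n, α n⟫ ≠ 0 := fun n => inner_self_ne_zero.2 (hα n)
  have hwd : ∀ v : V, plainPref w m (wΔinv v) = v := fun v => by
    have h := congrArg (fun f : Module.End ℝ V => f v) hinv2
    simpa [Module.End.mul_apply] using h
  have hwd' : ∀ v : V, wΔinv (plainPref w m v) = v := fun v => by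
    have h := congrArg (fun f : Module.End ℝ V => f v) hinv1
    simpa [Module.End.mul_apply] using h
  have hΦx : ∀ x : Fin m → ℝ,
      Φ x = ∑ h : Fin m, x h • ((1 / 2 : ℝ) • wΔinv (betaV w s α ((h : ℕ) + 1))) := by
    intro x
    have hx : x = ∑ h : Fin m, x h • (Pi.single h 1 : Fin m → ℝ) := by
      funext j
      rw [Finset.sum_apply]
      simp [Pi.single_apply]
    conv_lhs => rw [hx]
    rw [map_sum]
    exact Finset.sum_congr rfl fun h _ => by rw [map_smul, hΦ h]
  have hPl : ∀ x : Fin m → ℝ,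
      plainPref w m (Φ x)
        = ∑ h : Fin m, x h • ((1 / 2 : ℝ) • betaV w s α ((h : ℕ) + 1)) := by
    intro x
    rw [hΦx, map_sum]
    exact Finset.sum_congr rfl fun h _ => by rw [map_smul, map_smul, hwd]
  have hBA : ∀ n : ℕ, ⟪betaV w s α (n + 1), betaV w s α (n + 1)⟫ = ⟪α (n + 1), α (n + 1)⟫ := by
    intro n
    unfold betaV
    simp only [Nat.add_sub_cancel]
    rw [pref_orth hα hw hs]
  -- the core induction
  have core : ∀ x : Fin m → ℝ, M.mulVecLin x = 0 →
      ∀ ℓ : Fin m, coeffc w s α m (Φ x) ((ℓ : ℕ) + 1) = x ℓ := by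
    intro x hx
    have hrow : ∀ ℓ : Fin m, ∑ h : Fin m, M ℓ h * x h = 0 := by
      intro ℓ
      have h := congrFun hx ℓ
      simpa [Matrix.mulVecLin_apply, Matrix.mulVec, dotProduct] using h
    suffices H : ∀ N, ∀ ℓ : Fin m, (ℓ : ℕ) < N →
        coeffc w s α m (Φ x) ((ℓ : ℕ) + 1) = x ℓ from fun ℓ => H m ℓ ℓ.isLt
    intro N
    induction N with
    | zero => exact fun ℓ hℓ => absurd hℓ (Nat.not_lt_zero _)
    | succ N IH =>
      intro ℓ hℓ
      rcases Nat.lt_or_ge (ℓ : ℕ) N with hc | hc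
      · exact IH ℓ hc
      have hn : (ℓ : ℕ) = N := by omega
      have hnm : (ℓ : ℕ) < m := ℓ.isLt
      have e1 : ⟪α ((ℓ : ℕ) + 1), suff w m ((ℓ : ℕ) + 1) (Φ x)⟫
          = ⟪betaV w s α ((ℓ : ℕ) + 1), plainPref w m (Φ x)⟫
            + ∑ i ∈ Finset.range (ℓ : ℕ),
                ⟪betaV w s α ((ℓ : ℕ) + 1), uop w s m (i + 1) (Φ x)⟫ := by
        rw [betaV_inner hα hw hs, telescope w s m (ℓ : ℕ) hnm.le, LinearMap.add_apply,
          inner_add_right, LinearMap.sum_apply, inner_sum]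
      have e2 : ⟪betaV w s α ((ℓ : ℕ) + 1), plainPref w m (Φ x)⟫
          = ∑ h : Fin m, x h * ((1 / 2)
              * ⟪betaV w s α ((ℓ : ℕ) + 1), betaV w s α ((h : ℕ) + 1)⟫) := by
        rw [hPl x, inner_sum]
        exact Finset.sum_congr rfl fun h _ => by
          rw [real_inner_smul_right, real_inner_smul_right]
      have e3 : ∑ i ∈ Finset.range (ℓ : ℕ),
            ⟪betaV w s α ((ℓ : ℕ) + 1), uop w s m (i + 1) (Φ x)⟫
          = ∑ h : Fin m, (if (h : ℕ) < (ℓ : ℕ) then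
              -(x h * ⟪betaV w s α ((ℓ : ℕ) + 1), betaV w s α ((h : ℕ) + 1)⟫) else 0) := by
        rw [← sum_range_ite
            (fun i => ⟪betaV w s α ((ℓ : ℕ) + 1), uop w s m (i + 1) (Φ x)⟫) hnm.le,
          ← Fin.sum_univ_eq_sum_range
            (fun i => if i < (ℓ : ℕ) then
              ⟪betaV w s α ((ℓ : ℕ) + 1), uop w s m (i + 1) (Φ x)⟫ else 0) m]
        refine Finset.sum_congr rfl fun h _ => ?_
        by_cases hcc : (h : ℕ) < (ℓ : ℕ)
        · rw [if_pos hcc, if_pos hcc, uop_apply hs, inner_neg_right, real_inner_smul_right]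
          have hcf : (2 * ⟪α ((h : ℕ) + 1), suff w m ((h : ℕ) + 1) (Φ x)⟫)
                / ⟪α ((h : ℕ) + 1), α ((h : ℕ) + 1)⟫
              = coeffc w s α m (Φ x) ((h : ℕ) + 1) := by
            rw [betaD_coeff hw h.isLt.le]; ring
          rw [hcf, IH h (by omega)]
        · rw [if_neg hcc, if_neg hcc]
      have e4 : ∑ h : Fin m, (x h * ((1 / 2)
              * ⟪betaV w s α ((ℓ : ℕ) + 1), betaV w s α ((h : ℕ) + 1)⟫)
            + (if (h : ℕ) < (ℓ : ℕ) then
              -(x h * ⟪betaV w s α ((ℓ : ℕ) + 1), betaV w s α ((h : ℕ) + 1)⟫) else 0))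
          = ∑ h : Fin m, ((1 / 2) * (M ℓ h * x h)
            + (if h = ℓ then (1 / 2) * (x ℓ * ⟪α ((ℓ : ℕ) + 1), α ((ℓ : ℕ) + 1)⟫) else 0)) := by
        refine Finset.sum_congr rfl fun h _ => ?_
        rcases lt_trichotomy ((h : ℕ)) ((ℓ : ℕ)) with hlt | heq | hgt
        · have h2 : h < ℓ := by rw [Fin.lt_def]; omega
          have h1 : ¬ ℓ < h := by rw [Fin.lt_def]; omega
          have h3 : ¬ h = ℓ := by rintro rfl; omega
          rw [hM, if_neg h1, if_pos h2, if_pos hlt, if_neg h3,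
            real_inner_comm (betaV w s α ((h : ℕ) + 1)) (betaV w s α ((ℓ : ℕ) + 1))]
          ring
        · have he : h = ℓ := Fin.ext heq
          subst he
          rw [hM, if_neg (lt_irrefl h), if_neg (lt_irrefl h), if_pos rfl,
            if_neg (by omega : ¬ (h : ℕ) < (h : ℕ)), hBA]
          ring
        · have h1 : ℓ < h := by rw [Fin.lt_def]; omega
          have h3 : ¬ h = ℓ := by rintro rfl; omega
          rw [hM, if_pos h1, if_neg (by omega : ¬ (h : ℕ) < (ℓ : ℕ)), if_neg h3]
          ring
      have key : ⟪α ((ℓ : ℕ) + 1), suff w m ((ℓ : ℕ) + 1) (Φ x)⟫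
          = (1 / 2) * (x ℓ * ⟪α ((ℓ : ℕ) + 1), α ((ℓ : ℕ) + 1)⟫) := by
        rw [e1, e2, e3, ← Finset.sum_add_distrib, e4, Finset.sum_add_distrib,
          ← Finset.mul_sum, hrow ℓ]
        simp [Finset.sum_ite_eq']
      rw [betaD_coeff hw hnm.le, key]
      have hA := hA0 ((ℓ : ℕ) + 1)
      field_simp
  refine ⟨?_, ?_, ?_⟩
  · -- goal 1
    intro x hxk
    have hx : M.mulVecLin x = 0 := LinearMap.mem_ker.mp hxk
    have hcore := core x hx
    have htel : pref w s m = plainPref w m + ∑ i ∈ Finset.range m, uop w s m (i + 1) := by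
      have h := telescope w s m m le_rfl
      rwa [suff_top, mul_one] at h
    have huop : ∑ i ∈ Finset.range m, uop w s m (i + 1) (Φ x)
        = -∑ h : Fin m, x h • betaV w s α ((h : ℕ) + 1) := by
      rw [← Fin.sum_univ_eq_sum_range (fun i => uop w s m (i + 1) (Φ x)) m, ← Finset.sum_neg_distrib]
      refine Finset.sum_congr rfl fun h _ => ?_
      rw [uop_apply hs]
      have hcf : (2 * ⟪α ((h : ℕ) + 1), suff w m ((h : ℕ) + 1) (Φ x)⟫)
            / ⟪α ((h : ℕ) + 1), α ((h : ℕ) + 1)⟫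
          = coeffc w s α m (Φ x) ((h : ℕ) + 1) := by
        rw [betaD_coeff hw h.isLt.le]; ring
      rw [hcf, hcore h]
    rw [LinearMap.add_apply, htel, LinearMap.add_apply, LinearMap.sum_apply, huop, hPl x]
    have hhalf : (∑ h : Fin m, x h • ((1 / 2 : ℝ) • betaV w s α ((h : ℕ) + 1)))
          + (∑ h : Fin m, x h • ((1 / 2 : ℝ) • betaV w s α ((h : ℕ) + 1)))
        = ∑ h : Fin m, x h • betaV w s α ((h : ℕ) + 1) := by
      rw [← Finset.sum_add_distrib]
      exact Finset.sum_congr rfl fun h _ => by module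
    rw [← hhalf]
    abel
  · -- goal 2
    intro x hxk
    funext h
    exact core x (LinearMap.mem_ker.mp hxk) h
  · -- goal 3
    intro γ hγ
    have hpg : pref w s m γ = -(plainPref w m γ) := by
      rw [LinearMap.add_apply] at hγ
      exact eq_neg_of_add_eq_zero_left hγ
    have hinj : ∀ a b : V, plainPref w m a = plainPref w m b → a = b := fun a b hab => by
      have h := congrArg wΔinv hab
      rwa [hwd', hwd'] at h
    apply hinj
    rw [hPl (fun h : Fin m => coeffc w s α m γ ((h : ℕ) + 1))]
    have hterm : ∀ h : Fin m,
        coeffc w s α m γ ((h : ℕ) + 1) • ((1 / 2 : ℝ) • betaV w s α ((h : ℕ) + 1))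
          = -((1 / 2 : ℝ) • uop w s m ((h : ℕ) + 1) γ) := by
      intro h
      rw [uop_apply hs, betaD_coeff hw h.isLt.le, smul_neg, neg_neg, smul_smul, smul_smul]
      congr 1
      ring
    rw [Finset.sum_congr rfl fun h _ => hterm h]
    have hstep : ∑ h : Fin m, -((1 / 2 : ℝ) • uop w s m ((h : ℕ) + 1) γ)
        = -((1 / 2 : ℝ) • ∑ i ∈ Finset.range m, uop w s m (i + 1) γ) := by
      rw [← Fin.sum_univ_eq_sum_range (fun i => uop w s m (i + 1) γ) m, Finset.smul_sum,
        ← Finset.sum_neg_distrib]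
    rw [hstep]
    have hsum2 : ∑ i ∈ Finset.range m, uop w s m (i + 1) γ
        = pref w s m γ - plainPref w m γ := by
      have htel := telescope w s m m le_rfl
      rw [suff_top, mul_one] at htel
      rw [htel, LinearMap.add_apply, LinearMap.sum_apply]
      abel
    rw [hsum2, hpg]
    module
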